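/- In the general quantized rational chip-firing model, for every chip configuration D ≥ 0 and every k with 0 ≤ k ≤ n−1, there exists at least one k-stabilization of D, i.e., a k-stable configuration reachable from D by a finite sequence of legal k-firing moves. -/
import Mathlib


/-- Number of non-sink neighbors of `i` (in the graph `G` on the `n` non-sink
vertices) lying in `X`. -/
def degIn {n : ℕ} (G : SimpleGraph (Fin n)) [DecidableRel G.Adj]
    (X : Finset (Fin n)) (i : Fin n) : ℕ :=
  (X.filter fun j => G.Adj i j).card

/-- The quantized cluster-fire move `φ_S` (parameters `a, b, c`): every `i ∈ S`
loses `c + ⌊deg_{Sᶜ}(i)·a/b⌋` chips and every `j ∉ S` gains `⌊deg_S(j)·a/b⌋`. -/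
def gfire {n : ℕ} (a b c : ℕ) (G : SimpleGraph (Fin n)) [DecidableRel G.Adj]
    (S : Finset (Fin n)) (D : Fin n → ℤ) : Fin n → ℤ :=
  fun i =>
    if i ∈ S then D i - (c : ℤ) - ((degIn G Sᶜ i * a / b : ℕ) : ℤ)
    else D i + ((degIn G S i * a / b : ℕ) : ℤ)

/-- One legal `k`-firing move: `D ≥ 0`, some nonempty `S` with `|S| ≤ k+1`
fires, and the result is nonnegative. -/
def gLegalKStep {n : ℕ} (a b c k : ℕ) (G : SimpleGraph (Fin n)) [DecidableRel G.Adj]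
    (D D' : Fin n → ℤ) : Prop :=
  (∀ i, 0 ≤ D i) ∧ ∃ S : Finset (Fin n), S.Nonempty ∧ S.card ≤ k + 1 ∧
    D' = gfire a b c G S D ∧ (∀ i, 0 ≤ D' i)

/-- `D` is `k`-stable: `D ≥ 0` and no `k`-firing move is legal on `D`. -/
def gKStable {n : ℕ} (a b c k : ℕ) (G : SimpleGraph (Fin n)) [DecidableRel G.Adj]
    (D : Fin n → ℤ) : Prop :=
  (∀ i, 0 ≤ D i) ∧ ∀ S : Finset (Fin n), S.Nonempty → S.card ≤ k + 1 →
    ¬ (∀ i, 0 ≤ gfire a b c G S D i)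

open Finset

lemma cross_eq {n : ℕ} (G : SimpleGraph (Fin n)) [DecidableRel G.Adj] (S : Finset (Fin n)) :
    ∑ j ∈ Sᶜ, degIn G S j = ∑ i ∈ S, degIn G Sᶜ i := by
  simp only [degIn, Finset.card_filter]
  rw [Finset.sum_comm]
  refine Finset.sum_congr rfl fun i _ => Finset.sum_congr rfl fun j _ => ?_
  simp [G.adj_comm]

lemma nat_key {n : ℕ} (a b c : ℕ) (hb : 0 < b) (hc : 0 < c)
    (G : SimpleGraph (Fin n)) [DecidableRel G.Adj]
    (S : Finset (Fin n)) (hS : S.Nonempty) :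
    ∑ j ∈ Sᶜ, degIn G S j * a / b < c * S.card + ∑ i ∈ S, degIn G Sᶜ i * a / b := by
  have h1 : b * ∑ j ∈ Sᶜ, degIn G S j * a / b ≤ ∑ j ∈ Sᶜ, degIn G S j * a := by
    rw [Finset.mul_sum]
    exact Finset.sum_le_sum fun j _ => by
      rw [mul_comm]; exact Nat.div_mul_le_self _ _
  have h2 : ∑ i ∈ S, degIn G Sᶜ i * a ≤
      (∑ i ∈ S, b * (degIn G Sᶜ i * a / b)) + S.card * (b - 1) := by
    calc ∑ i ∈ S, degIn G Sᶜ i * a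
        ≤ ∑ i ∈ S, (b * (degIn G Sᶜ i * a / b) + (b - 1)) := by
          refine Finset.sum_le_sum fun i _ => ?_
          have hmod := Nat.div_add_mod (degIn G Sᶜ i * a) b
          have hlt : degIn G Sᶜ i * a % b < b := Nat.mod_lt _ hb
          omega
      _ = (∑ i ∈ S, b * (degIn G Sᶜ i * a / b)) + S.card * (b - 1) := by
          rw [Finset.sum_add_distrib, Finset.sum_const, smul_eq_mul]
  have hcross : ∑ j ∈ Sᶜ, degIn G S j * a = ∑ i ∈ S, degIn G Sᶜ i * a := by
    rw [← Finset.sum_mul, ← Finset.sum_mul, cross_eq]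
  have hcard : 0 < S.card := Finset.card_pos.mpr hS
  have hmain : b * ∑ j ∈ Sᶜ, degIn G S j * a / b <
      b * (c * S.card + ∑ i ∈ S, degIn G Sᶜ i * a / b) := by
    calc b * ∑ j ∈ Sᶜ, degIn G S j * a / b
        ≤ ∑ i ∈ S, degIn G Sᶜ i * a := hcross ▸ h1
      _ ≤ (∑ i ∈ S, b * (degIn G Sᶜ i * a / b)) + S.card * (b - 1) := h2
      _ < (∑ i ∈ S, b * (degIn G Sᶜ i * a / b)) + S.card * (b * c) := by
          have hb1 : b - 1 < b * c :=
            lt_of_lt_of_le (Nat.sub_lt hb one_pos) (Nat.le_mul_of_pos_right _ hc)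
          have : S.card * (b - 1) < S.card * (b * c) :=
            mul_lt_mul_of_pos_left hb1 hcard
          omega
      _ = b * (c * S.card + ∑ i ∈ S, degIn G Sᶜ i * a / b) := by
          rw [← Finset.mul_sum]; ring
  exact Nat.lt_of_mul_lt_mul_left hmain

lemma sum_gfire_lt {n : ℕ} (a b c : ℕ) (hb : 0 < b) (hc : 0 < c)
    (G : SimpleGraph (Fin n)) [DecidableRel G.Adj]
    (S : Finset (Fin n)) (hS : S.Nonempty) (D : Fin n → ℤ) :
    ∑ i, gfire a b c G S D i < ∑ i, D i := by
  rw [← Finset.sum_add_sum_compl S (gfire a b c G S D), ← Finset.sum_add_sum_compl S D]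
  have hL : ∑ i ∈ S, gfire a b c G S D i
      = ∑ i ∈ S, D i - (c * S.card : ℕ) - ∑ i ∈ S, ((degIn G Sᶜ i * a / b : ℕ) : ℤ) := by
    simp only [gfire]
    rw [Finset.sum_ite_of_true (by intro i hi; exact hi)]
    push_cast
    rw [Finset.sum_sub_distrib, Finset.sum_sub_distrib, Finset.sum_const, nsmul_eq_mul]
    push_cast
    ring
  have hR : ∑ i ∈ Sᶜ, gfire a b c G S D i
      = ∑ i ∈ Sᶜ, D i + ∑ i ∈ Sᶜ, ((degIn G S i * a / b : ℕ) : ℤ) := by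
    simp only [gfire]
    rw [Finset.sum_ite_of_false (by intro i hi; exact (Finset.mem_compl.mp hi)),
      Finset.sum_add_distrib]
  rw [hL, hR]
  have key := nat_key a b c hb hc G S hS
  have : (∑ i ∈ Sᶜ, ((degIn G S i * a / b : ℕ) : ℤ))
      < (c * S.card : ℕ) + ∑ i ∈ S, ((degIn G Sᶜ i * a / b : ℕ) : ℤ) := by
    push_cast [← Nat.cast_sum]
    exact_mod_cast key
  linarith

/-- every nonnegative configuration has a `k`-stabilization. -/
theorem exists_kStabilization (n a b c : ℕ) (hn : 0 < n) (ha : 0 < a) (hb : 0 < b)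
    (hc : 0 < c) (G : SimpleGraph (Fin n)) [DecidableRel G.Adj]
    (D : Fin n → ℤ) (hD : ∀ i, 0 ≤ D i) (k : ℕ) (hk : k ≤ n - 1) :
    ∃ D' : Fin n → ℤ,
      Relation.ReflTransGen (gLegalKStep a b c k G) D D' ∧ gKStable a b c k G D' := by
  obtain ⟨N, hN⟩ : ∃ N, (∑ i, D i).toNat ≤ N := ⟨_, le_rfl⟩
  clear hn ha hk
  induction N using Nat.strong_induction_on generalizing D with
  | _ N ih =>
    by_cases hst : ∀ S : Finset (Fin n), S.Nonempty → S.card ≤ k + 1 →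
        ¬ (∀ i, 0 ≤ gfire a b c G S D i)
    · exact ⟨D, Relation.ReflTransGen.refl, hD, hst⟩
    · push_neg at hst
      obtain ⟨S, hSne, hScard, hpos⟩ := hst
      have hlt : ∑ i, gfire a b c G S D i < ∑ i, D i := sum_gfire_lt a b c hb hc G S hSne D
      have h0 : 0 ≤ ∑ i, gfire a b c G S D i := Finset.sum_nonneg fun i _ => hpos i
      have hlt' : (∑ i, gfire a b c G S D i).toNat < N :=
        lt_of_lt_of_le ((Int.toNat_lt_toNat (lt_of_le_of_lt h0 hlt)).mpr hlt) hN
      obtain ⟨D', hrel, hstab⟩ := ih _ hlt' (gfire a b c G S D) hpos le_rfl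
      exact ⟨D', Relation.ReflTransGen.head ⟨hD, S, hSne, hScard, rfl, hpos⟩ hrel, hstab⟩
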